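/- The group PSL(2,ℤ) = SL(2,ℤ)/{±I} admits the presentation ⟨r, l | (l r⁻¹ l)² = 1, (l r⁻¹)³ = 1⟩: the presented group on two generators r, l with relators (l r⁻¹ l)² and (l r⁻¹)³ is isomorphic to SL(2,ℤ)/center via the homomorphism sending r to the class of the matrix [[1,1],[0,1]] and l to the class of the matrix [[1,0],[1,1]]. -/

import Mathlib

/-- The free-group generator corresponding to `r`. -/
def genR : FreeGroup Bool := FreeGroup.of false

/-- The free-group generator corresponding to `l`. -/
def genL : FreeGroup Bool := FreeGroup.of true

/-- The relators `(l r⁻¹ l)²` and `(l r⁻¹)³` of the presentation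
`⟨r, l ∣ (l r⁻¹ l)² = 1, (l r⁻¹)³ = 1⟩`. -/
def pslRels : Set (FreeGroup Bool) :=
  {(genL * genR⁻¹ * genL) ^ 2, (genL * genR⁻¹) ^ 3}

/-- The matrix `[[1,1],[0,1]]` as an element of `SL(2, ℤ)`. -/
def matR : Matrix.SpecialLinearGroup (Fin 2) ℤ :=
  ⟨!![1, 1; 0, 1], by simp [Matrix.det_fin_two_of]⟩

/-- The matrix `[[1,0],[1,1]]` as an element of `SL(2, ℤ)`. -/
def matL : Matrix.SpecialLinearGroup (Fin 2) ℤ :=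
  ⟨!![1, 0; 1, 1], by simp [Matrix.det_fin_two_of]⟩

section Aux

open Matrix ModularGroup Matrix.SpecialLinearGroup UpperHalfPlane

local notation "SL2Z" => Matrix.SpecialLinearGroup (Fin 2) ℤ
local notation "Q2" => SL2Z ⧸ Subgroup.center SL2Z

/-! ### The center of `SL(2, ℤ)` -/

lemma PSL2Z.center_sl2z {A : SL2Z} (hA : A ∈ Subgroup.center SL2Z) : A = 1 ∨ A = -1 := by
  obtain ⟨r, hr2, hr⟩ := Matrix.SpecialLinearGroup.mem_center_iff.mp hA
  simp only [Fintype.card_fin] at hr2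
  have : r = 1 ∨ r = -1 := by
    rcases Int.eq_one_or_neg_one_of_mul_eq_one' (by rw [← sq]; exact hr2) with ⟨h, _⟩ | ⟨h, _⟩ <;>
      [left; right] <;> exact h
  rcases this with h | h <;> subst h
  · left; ext i j; have := congrFun (congrFun hr i) j; simpa using this.symm
  · right; ext i j
    have := congrFun (congrFun hr i) j
    simp only [Matrix.scalar_apply] at this
    rw [← this]
    simp [Matrix.diagonal_apply, Matrix.one_apply]
    split <;> simp

lemma PSL2Z.neg_one_mem_center : (-1 : SL2Z) ∈ Subgroup.center SL2Z := by
  rw [Matrix.SpecialLinearGroup.mem_center_iff]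
  refine ⟨-1, by norm_num, ?_⟩
  ext i j
  simp [Matrix.diagonal_apply, Matrix.one_apply]

/-! ### Generation of `SL(2, ℤ)` by `S` and `T` -/

lemma PSL2Z.sl2z_gen (A : SL2Z) : A ∈ Subgroup.closure ({S, T} : Set SL2Z) := by
  have hS : S ∈ Subgroup.closure ({S, T} : Set SL2Z) := Subgroup.subset_closure (by simp)
  have hT : T ∈ Subgroup.closure ({S, T} : Set SL2Z) := Subgroup.subset_closure (by simp)
  induction' hn : (A.1 1 0).natAbs using Nat.strong_induction_on with n ih generalizing A
  subst hn
  by_cases hc : A.1 1 0 = 0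
  · have hdet : A.1 0 0 * A.1 1 1 - A.1 0 1 * A.1 1 0 = 1 := by
      rw [← Matrix.det_fin_two]; exact A.2
    rw [hc, mul_zero, sub_zero] at hdet
    rcases Int.eq_one_or_neg_one_of_mul_eq_one' hdet with ⟨ha, hd⟩ | ⟨ha, hd⟩
    · have : A = T ^ (A.1 0 1) := by
        ext i j
        rw [coe_T_zpow]
        fin_cases i <;> fin_cases j <;> simp [ha, hd, hc]
      rw [this]; exact Subgroup.zpow_mem _ hT _
    · have : A = S * S * T ^ (-A.1 0 1) := by
        ext i j
        rw [Matrix.SpecialLinearGroup.coe_mul, Matrix.SpecialLinearGroup.coe_mul,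
          coe_T_zpow, coe_S]
        fin_cases i <;> fin_cases j <;>
          simp [Matrix.mul_apply, Fin.sum_univ_succ, ha, hd, hc]
      rw [this]
      exact Subgroup.mul_mem _ (Subgroup.mul_mem _ hS hS) (Subgroup.zpow_mem _ hT _)
  · set a := A.1 0 0 with ha
    set c := A.1 1 0 with hcdef
    set q := a / c with hq
    have key : ((S * (T ^ (-q) * A)).1 1 0).natAbs < c.natAbs := by
      have h1 : (S * (T ^ (-q) * A)).1 1 0 = a - q * c := by
        rw [Matrix.SpecialLinearGroup.coe_mul, Matrix.SpecialLinearGroup.coe_mul, coe_T_zpow,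
          coe_S]
        simp [Matrix.mul_apply, Fin.sum_univ_succ, Matrix.vecMul, Matrix.vecHead,
          Matrix.vecTail, dotProduct, ha, hcdef]
        ring
      rw [h1]
      have h2 : a - q * c = a % c := by rw [hq, Int.emod_def]; ring
      rw [h2]
      have h3 := Int.emod_nonneg a hc
      have h4 := Int.emod_lt a hc
      omega
    have hB := ih _ key (S * (T ^ (-q) * A)) rfl
    have : A = T ^ q * (S⁻¹ * (S * (T ^ (-q) * A))) := by group
    rw [this]
    exact Subgroup.mul_mem _ (Subgroup.zpow_mem _ hT _)
      (Subgroup.mul_mem _ (Subgroup.inv_mem _ hS) hB)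

/-! ### Matrix identities -/

/-- The order-3 element `L * R⁻¹ = [[1,-1],[1,0]]`. -/
def matU : SL2Z := matL * matR⁻¹

lemma PSL2Z.coe_matR_inv : (matR⁻¹).1 = !![1, -1; 0, 1] := by
  rw [Matrix.SpecialLinearGroup.coe_inv]
  simp [matR, adjugate_fin_two]

lemma PSL2Z.coe_matU : matU.1 = !![1, -1; 1, 0] := by
  rw [matU, Matrix.SpecialLinearGroup.coe_mul, PSL2Z.coe_matR_inv]
  simp [matL, Matrix.mul_fin_two]

lemma PSL2Z.coe_matUU : (matU * matU).1 = !![0, -1; 1, -1] := by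
  rw [Matrix.SpecialLinearGroup.coe_mul, PSL2Z.coe_matU]
  simp [Matrix.mul_fin_two]

lemma PSL2Z.LRL_eq_S : matL * matR⁻¹ * matL = S := by
  apply Subtype.ext
  rw [Matrix.SpecialLinearGroup.coe_mul, ← matU, PSL2Z.coe_matU]
  simp [matL, coe_S, Matrix.mul_fin_two]

lemma PSL2Z.S_sq : S * S = (-1 : SL2Z) := Subtype.ext S_mul_S_eq

lemma PSL2Z.matU_cube : matU * matU * matU = (-1 : SL2Z) := by
  apply Subtype.ext
  rw [Matrix.SpecialLinearGroup.coe_mul, Matrix.SpecialLinearGroup.coe_mul, PSL2Z.coe_matU,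
    Matrix.SpecialLinearGroup.coe_neg]
  simp [Matrix.mul_fin_two]
  ext i j
  fin_cases i <;> fin_cases j <;> simp [Matrix.one_apply]

lemma PSL2Z.matUS : matU * S = -matR := by
  apply Subtype.ext
  rw [Matrix.SpecialLinearGroup.coe_mul, PSL2Z.coe_matU, coe_S,
    Matrix.SpecialLinearGroup.coe_neg]
  simp [matR, Matrix.mul_fin_two]

lemma PSL2Z.matUUS : matU * matU * S = -matL := by
  apply Subtype.ext
  rw [Matrix.SpecialLinearGroup.coe_mul, Matrix.SpecialLinearGroup.coe_mul, PSL2Z.coe_matU,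
    coe_S, Matrix.SpecialLinearGroup.coe_neg]
  simp [matL, Matrix.mul_fin_two]

lemma PSL2Z.neg_eq (g : SL2Z) : -g = (-1 : SL2Z) * g := by
  apply Subtype.ext
  rw [Matrix.SpecialLinearGroup.coe_mul, Matrix.SpecialLinearGroup.coe_neg,
    Matrix.SpecialLinearGroup.coe_neg, Matrix.SpecialLinearGroup.coe_one]
  simp

/-! ### Analytic ping-pong lemmas on the upper half-plane -/

lemma PSL2Z.hp_ne_zero (z : ℍ) : (z : ℂ) ≠ 0 := by
  intro h
  have := z.im_pos
  rw [UpperHalfPlane.im, h] at this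
  simp at this

lemma PSL2Z.smul_coe_eq (g : SL2Z) (z : ℍ) :
    ((g • z : ℍ) : ℂ) = ((g.1 0 0 : ℂ) * z + g.1 0 1) / ((g.1 1 0 : ℂ) * z + g.1 1 1) := by
  rw [specialLinearGroup_apply, UpperHalfPlane.coe_mk]
  norm_cast

lemma PSL2Z.re_S_smul (z : ℍ) (hz : 0 < z.re) : (S • z).re < 0 := by
  have h : ((S • z : ℍ) : ℂ) = (-1) / (z : ℂ) := by
    rw [PSL2Z.smul_coe_eq, show (S.1 0 0 : ℂ) = 0 by norm_num [coe_S],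
      show (S.1 0 1 : ℂ) = -1 by norm_num [coe_S], show (S.1 1 0 : ℂ) = 1 by norm_num [coe_S],
      show (S.1 1 1 : ℂ) = 0 by norm_num [coe_S]]
    ring
  have h2 : (S • z).re = ((-1 : ℂ) / (z : ℂ)).re := by rw [← h]; rfl
  rw [h2, Complex.div_re]
  have hns : 0 < Complex.normSq (z : ℂ) := Complex.normSq_pos.mpr (PSL2Z.hp_ne_zero z)
  have hre : ((-1 : ℂ)).re = -1 := by norm_num
  have him : ((-1 : ℂ)).im = 0 := by norm_num
  rw [hre, him]
  have hz' : 0 < (z : ℂ).re := hz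
  have h1 : -1 * (z : ℂ).re / Complex.normSq (z : ℂ) < 0 := by
    apply div_neg_of_neg_of_pos _ hns
    nlinarith
  simpa using h1

lemma PSL2Z.re_U_smul (z : ℍ) (hz : z.re < 0) : 0 < (matU • z).re := by
  have h : ((matU • z : ℍ) : ℂ) = ((z : ℂ) - 1) / (z : ℂ) := by
    rw [PSL2Z.smul_coe_eq, show (matU.1 0 0 : ℂ) = 1 by norm_num [PSL2Z.coe_matU],
      show (matU.1 0 1 : ℂ) = -1 by norm_num [PSL2Z.coe_matU],
      show (matU.1 1 0 : ℂ) = 1 by norm_num [PSL2Z.coe_matU],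
      show (matU.1 1 1 : ℂ) = 0 by norm_num [PSL2Z.coe_matU]]
    ring
  have h2 : (matU • z).re = (((z : ℂ) - 1) / (z : ℂ)).re := by rw [← h]; rfl
  rw [h2, Complex.div_re]
  have hns : 0 < Complex.normSq (z : ℂ) := Complex.normSq_pos.mpr (PSL2Z.hp_ne_zero z)
  have hzre : ((z : ℂ) - 1).re = (z : ℂ).re - 1 := by simp
  have hzim : ((z : ℂ) - 1).im = (z : ℂ).im := by simp
  rw [hzre, hzim]
  have h3 : (z : ℂ).re < 0 := hz
  have him : 0 < (z : ℂ).im := z.im_pos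
  have hnsle : Complex.normSq (z : ℂ) = (z : ℂ).re ^ 2 + (z : ℂ).im ^ 2 :=
    Complex.normSq_apply (z : ℂ) ▸ by ring
  have : 0 < ((z : ℂ).re - 1) * (z : ℂ).re + (z : ℂ).im * (z : ℂ).im := by nlinarith
  rw [← add_div]
  exact div_pos this hns

lemma PSL2Z.re_UU_smul (z : ℍ) (hz : z.re < 0) : 0 < ((matU * matU) • z).re := by
  have h : (((matU * matU) • z : ℍ) : ℂ) = (-1) / ((z : ℂ) - 1) := by
    rw [PSL2Z.smul_coe_eq, show ((matU * matU).1 0 0 : ℂ) = 0 by rw [PSL2Z.coe_matUU]; norm_num,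
      show ((matU * matU).1 0 1 : ℂ) = -1 by rw [PSL2Z.coe_matUU]; norm_num,
      show ((matU * matU).1 1 0 : ℂ) = 1 by rw [PSL2Z.coe_matUU]; norm_num,
      show ((matU * matU).1 1 1 : ℂ) = -1 by rw [PSL2Z.coe_matUU]; norm_num]
    ring
  have h2 : ((matU * matU) • z).re = ((-1 : ℂ) / ((z : ℂ) - 1)).re := by rw [← h]; rfl
  have hne : (z : ℂ) - 1 ≠ 0 := by
    intro hcon
    rw [sub_eq_zero] at hcon
    have h4 : (z : ℂ).im = 0 := by rw [hcon]; simp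
    rw [UpperHalfPlane.coe_im] at h4
    linarith [z.im_pos]
  rw [h2, Complex.div_re]
  have hns : 0 < Complex.normSq ((z : ℂ) - 1) := Complex.normSq_pos.mpr hne
  have h3 : (z : ℂ).re < 0 := hz
  have : 0 < (-1 : ℂ).re * ((z : ℂ) - 1).re / Complex.normSq ((z : ℂ) - 1) := by
    apply div_pos _ hns
    simp only [Complex.neg_re, Complex.one_re, Complex.sub_re, Complex.one_re]
    nlinarith
  simpa using this

/-! ### The action of the quotient on `ℍ` -/

noncomputable def PSL2Z.qPerm : Q2 →* Equiv.Perm ℍ :=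
  QuotientGroup.lift _ (MulAction.toPermHom SL2Z ℍ) (by
    intro x hx
    rcases PSL2Z.center_sl2z hx with h | h <;> subst h
    · exact map_one (MulAction.toPermHom SL2Z ℍ)
    · ext z
      simpa using SL_neg_smul 1 z)

noncomputable instance : MulAction Q2 ℍ := MulAction.compHom ℍ PSL2Z.qPerm

lemma PSL2Z.q_smul (g : SL2Z) (z : ℍ) : (QuotientGroup.mk g : Q2) • z = g • z := rfl

/-! ### Homomorphisms from cyclic groups -/

def PSL2Z.zmodHom (n : ℕ) [NeZero n] {G : Type*} [Group G] (g : G) (h : g ^ (n : ℕ) = 1) :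
    Multiplicative (ZMod n) →* G :=
  AddMonoidHom.toMultiplicativeLeft
    (ZMod.lift n ⟨zmultiplesHom (Additive G) (Additive.ofMul g), by
      simpa [zmultiplesHom, ← ofMul_zpow] using congrArg Additive.ofMul h⟩)

lemma PSL2Z.zmodHom_apply (n : ℕ) [NeZero n] {G : Type*} [Group G] (g : G)
    (h : g ^ (n : ℕ) = 1) (k : ℤ) :
    PSL2Z.zmodHom n g h (Multiplicative.ofAdd (k : ZMod n)) = g ^ k := by
  simp [PSL2Z.zmodHom, AddMonoidHom.coe_toMultiplicativeLeft, ZMod.lift_coe, zmultiplesHom]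

/-! ### The coproduct `C2 * C3` -/

abbrev PSL2Z.Fam : Bool → Type := fun b => if b then Multiplicative (ZMod 3) else Multiplicative (ZMod 2)

instance (b : Bool) : Group (PSL2Z.Fam b) := by
  cases b
  · exact inferInstanceAs (Group (Multiplicative (ZMod 2)))
  · exact inferInstanceAs (Group (Multiplicative (ZMod 3)))

lemma PSL2Z.two_cases : ∀ h : Multiplicative (ZMod 2), h ≠ 1 →
    h = Multiplicative.ofAdd (1 : ZMod 2) := by decide

lemma PSL2Z.three_cases : ∀ h : Multiplicative (ZMod 3), h ≠ 1 →
    h = Multiplicative.ofAdd (1 : ZMod 3) ∨ h = Multiplicative.ofAdd (2 : ZMod 3) := by decide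

def PSL2Z.sQ : Q2 := QuotientGroup.mk S
def PSL2Z.uQ : Q2 := QuotientGroup.mk matU

lemma PSL2Z.sQ_sq : PSL2Z.sQ ^ (2 : ℕ) = 1 := by
  have : PSL2Z.sQ ^ (2 : ℕ) = (QuotientGroup.mk (S * S) : Q2) := by
    rw [sq]; rfl
  rw [this, PSL2Z.S_sq]
  exact (QuotientGroup.eq_one_iff _).mpr PSL2Z.neg_one_mem_center

lemma PSL2Z.uQ_cube : PSL2Z.uQ ^ (3 : ℕ) = 1 := by
  have : PSL2Z.uQ ^ (3 : ℕ) = (QuotientGroup.mk (matU * matU * matU) : Q2) := by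
    rw [pow_succ, sq]; rfl
  rw [this, PSL2Z.matU_cube]
  exact (QuotientGroup.eq_one_iff _).mpr PSL2Z.neg_one_mem_center

def PSL2Z.fQ : ∀ b, PSL2Z.Fam b →* Q2 := fun b => by
  cases b
  · exact PSL2Z.zmodHom 2 PSL2Z.sQ PSL2Z.sQ_sq
  · exact PSL2Z.zmodHom 3 PSL2Z.uQ PSL2Z.uQ_cube

lemma PSL2Z.zmodHom_apply' (n : ℕ) [NeZero n] {G : Type*} [Group G] (g : G)
    (h : g ^ (n : ℕ) = 1) (x : ZMod n) :
    PSL2Z.zmodHom n g h (Multiplicative.ofAdd x) = g ^ (x.val) := by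
  have h1 : ((x.val : ℤ) : ZMod n) = x := by
    rw [Int.cast_natCast, ZMod.natCast_val, ZMod.cast_id]
  calc PSL2Z.zmodHom n g h (Multiplicative.ofAdd x)
      = PSL2Z.zmodHom n g h (Multiplicative.ofAdd ((x.val : ℤ) : ZMod n)) := by rw [h1]
    _ = g ^ ((x.val : ℕ) : ℤ) := PSL2Z.zmodHom_apply n g h _
    _ = g ^ (x.val) := zpow_natCast g x.val

lemma PSL2Z.fQ_false_one :
    PSL2Z.zmodHom 2 PSL2Z.sQ PSL2Z.sQ_sq (Multiplicative.ofAdd (1 : ZMod 2)) = PSL2Z.sQ := by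
  show PSL2Z.zmodHom 2 PSL2Z.sQ PSL2Z.sQ_sq (Multiplicative.ofAdd (1 : ZMod 2)) = PSL2Z.sQ
  rw [PSL2Z.zmodHom_apply', show (1 : ZMod 2).val = 1 by decide, pow_one]

lemma PSL2Z.fQ_true_one :
    PSL2Z.zmodHom 3 PSL2Z.uQ PSL2Z.uQ_cube (Multiplicative.ofAdd (1 : ZMod 3)) = PSL2Z.uQ := by
  show PSL2Z.zmodHom 3 PSL2Z.uQ PSL2Z.uQ_cube (Multiplicative.ofAdd (1 : ZMod 3)) = PSL2Z.uQ
  rw [PSL2Z.zmodHom_apply', show (1 : ZMod 3).val = 1 by decide, pow_one]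

lemma PSL2Z.fQ_true_two :
    PSL2Z.zmodHom 3 PSL2Z.uQ PSL2Z.uQ_cube (Multiplicative.ofAdd (2 : ZMod 3)) =
      (QuotientGroup.mk (matU * matU) : Q2) := by
  show PSL2Z.zmodHom 3 PSL2Z.uQ PSL2Z.uQ_cube (Multiplicative.ofAdd (2 : ZMod 3)) =
    (QuotientGroup.mk (matU * matU) : Q2)
  rw [PSL2Z.zmodHom_apply', show (2 : ZMod 3).val = 2 by decide, sq]
  rfl

lemma PSL2Z.pp_false (g : Multiplicative (ZMod 2)) (hg : g ≠ 1) (z : ℍ) (hz : 0 < z.re) :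
    ((PSL2Z.zmodHom 2 PSL2Z.sQ PSL2Z.sQ_sq g) • z).re < 0 := by
  have hh := PSL2Z.two_cases g hg
  subst hh
  rw [PSL2Z.fQ_false_one, PSL2Z.sQ, PSL2Z.q_smul]
  exact PSL2Z.re_S_smul z hz

lemma PSL2Z.pp_true (g : Multiplicative (ZMod 3)) (hg : g ≠ 1) (z : ℍ) (hz : z.re < 0) :
    0 < ((PSL2Z.zmodHom 3 PSL2Z.uQ PSL2Z.uQ_cube g) • z).re := by
  rcases PSL2Z.three_cases g hg with hh | hh <;> subst hh
  · rw [PSL2Z.fQ_true_one, PSL2Z.uQ, PSL2Z.q_smul]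
    exact PSL2Z.re_U_smul z hz
  · rw [PSL2Z.fQ_true_two, PSL2Z.q_smul]
    exact PSL2Z.re_UU_smul z hz

def PSL2Z.X : Bool → Set UpperHalfPlane := fun b => match b with
  | false => {z | z.re < 0}
  | true => {z | 0 < z.re}

lemma PSL2Z.kappa_inj : Function.Injective (Monoid.CoprodI.lift PSL2Z.fQ) := by
  apply Monoid.CoprodI.lift_injective_of_ping_pong PSL2Z.fQ _ PSL2Z.X
  · -- nonempty
    intro b
    cases b
    · exact ⟨UpperHalfPlane.mk ⟨-1, 1⟩ (by norm_num), show ((⟨-1, 1⟩ : ℂ)).re < 0 by norm_num⟩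
    · exact ⟨UpperHalfPlane.mk ⟨1, 1⟩ (by norm_num), show (0 : ℝ) < (⟨1, 1⟩ : ℂ).re by norm_num⟩
  · -- disjoint
    intro i j hij
    have : ∀ z : UpperHalfPlane, z ∈ PSL2Z.X false → z ∈ PSL2Z.X true → False := by
      intro z h1 h2
      exact absurd h2 (by simp [PSL2Z.X] at h1 ⊢; linarith)
    cases i <;> cases j <;> simp at hij <;>
      exact Set.disjoint_left.mpr (fun z hz hz' => by
        first
          | exact this z hz hz'
          | exact this z hz' hz)
  · -- ping-pong
    intro i j hij
    cases i <;> cases j <;> try exact absurd rfl hij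
    · -- i = false (C2), j = true
      intro h hne
      rintro x ⟨z, hz, rfl⟩
      exact PSL2Z.pp_false h hne z hz
    · -- i = true (C3), j = false
      intro h hne
      rintro x ⟨z, hz, rfl⟩
      exact PSL2Z.pp_true h hne z hz
  · -- cardinality
    right
    refine ⟨true, ?_⟩
    show (3 : Cardinal) ≤ Cardinal.mk (Multiplicative (ZMod 3))
    rw [Cardinal.mk_fintype]
    norm_num
end Aux

section Glue
open Matrix ModularGroup Matrix.SpecialLinearGroup UpperHalfPlane Monoid
local notation "SL2Z" => Matrix.SpecialLinearGroup (Fin 2) ℤ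
local notation "Q2" => SL2Z ⧸ Subgroup.center SL2Z

def PSL2Z.sig : Monoid.CoprodI PSL2Z.Fam :=
  Monoid.CoprodI.of (i := false) (Multiplicative.ofAdd (1 : ZMod 2))

def PSL2Z.ups : Monoid.CoprodI PSL2Z.Fam :=
  Monoid.CoprodI.of (i := true) (Multiplicative.ofAdd (1 : ZMod 3))

lemma PSL2Z.sig_sq : PSL2Z.sig * PSL2Z.sig = 1 := by
  erw [PSL2Z.sig, ← _root_.map_mul]
  exact (congrArg (⇑(Monoid.CoprodI.of (M := PSL2Z.Fam) (i := false)))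
    (show Multiplicative.ofAdd (1 : ZMod 2) * Multiplicative.ofAdd (1 : ZMod 2) = 1 from rfl)).trans
    (_root_.map_one _)

lemma PSL2Z.ups_cube : PSL2Z.ups * PSL2Z.ups * PSL2Z.ups = 1 := by
  erw [PSL2Z.ups, ← _root_.map_mul, ← _root_.map_mul]
  exact (congrArg (⇑(Monoid.CoprodI.of (M := PSL2Z.Fam) (i := true)))
    (show Multiplicative.ofAdd (1 : ZMod 3) * Multiplicative.ofAdd (1 : ZMod 3) *
      Multiplicative.ofAdd (1 : ZMod 3) = 1 from rfl)).trans (_root_.map_one _)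

def PSL2Z.fb : Bool → Monoid.CoprodI PSL2Z.Fam := fun b =>
  if b then PSL2Z.ups * PSL2Z.ups * PSL2Z.sig else PSL2Z.ups * PSL2Z.sig

lemma PSL2Z.relsbind : ∀ r ∈ pslRels, FreeGroup.lift PSL2Z.fb r = 1 := by
  intro r hr
  simp only [pslRels, Set.mem_insert_iff, Set.mem_singleton_iff] at hr
  rcases hr with rfl | rfl
  · rw [_root_.map_pow, _root_.map_mul, _root_.map_mul, _root_.map_inv]
    simp only [genL, genR, FreeGroup.lift_apply_of]
    rw [show PSL2Z.fb true = PSL2Z.ups * PSL2Z.ups * PSL2Z.sig from rfl,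
      show PSL2Z.fb false = PSL2Z.ups * PSL2Z.sig from rfl]
    have h1 : (PSL2Z.ups * PSL2Z.ups * PSL2Z.sig) * (PSL2Z.ups * PSL2Z.sig)⁻¹ *
        (PSL2Z.ups * PSL2Z.ups * PSL2Z.sig) =
        (PSL2Z.ups * PSL2Z.ups * PSL2Z.ups) * PSL2Z.sig := by group
    rw [h1, PSL2Z.ups_cube, one_mul, sq, PSL2Z.sig_sq]
  · rw [_root_.map_pow, _root_.map_mul, _root_.map_inv]
    simp only [genL, genR, FreeGroup.lift_apply_of]
    rw [show PSL2Z.fb true = PSL2Z.ups * PSL2Z.ups * PSL2Z.sig from rfl,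
      show PSL2Z.fb false = PSL2Z.ups * PSL2Z.sig from rfl]
    have h1 : (PSL2Z.ups * PSL2Z.ups * PSL2Z.sig) * (PSL2Z.ups * PSL2Z.sig)⁻¹ = PSL2Z.ups := by
      group
    rw [h1, show PSL2Z.ups ^ 3 = PSL2Z.ups * PSL2Z.ups * PSL2Z.ups by rw [pow_succ, sq],
      PSL2Z.ups_cube]

def PSL2Z.theta : PresentedGroup pslRels →* Monoid.CoprodI PSL2Z.Fam :=
  PresentedGroup.toGroup PSL2Z.relsbind

lemma PSL2Z.theta_of (b : Bool) : PSL2Z.theta (PresentedGroup.of b) = PSL2Z.fb b :=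
  PresentedGroup.toGroup.of PSL2Z.relsbind

/-! ### relations in the presented group -/

def PSL2Z.rP : PresentedGroup pslRels := PresentedGroup.of false
def PSL2Z.lP : PresentedGroup pslRels := PresentedGroup.of true
def PSL2Z.uP : PresentedGroup pslRels := PSL2Z.lP * PSL2Z.rP⁻¹
def PSL2Z.sP : PresentedGroup pslRels := PSL2Z.lP * PSL2Z.rP⁻¹ * PSL2Z.lP

lemma PSL2Z.mk_rel {w : FreeGroup Bool} (hw : w ∈ pslRels) :
    PresentedGroup.mk pslRels w = 1 :=
  (QuotientGroup.eq_one_iff w).mpr (Subgroup.subset_normalClosure hw)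

lemma PSL2Z.sP_sq : PSL2Z.sP ^ (2 : ℕ) = 1 := by
  have h : PSL2Z.sP ^ (2 : ℕ) = PresentedGroup.mk pslRels ((genL * genR⁻¹ * genL) ^ 2) := by
    rw [_root_.map_pow, _root_.map_mul, _root_.map_mul, _root_.map_inv]
    rfl
  rw [h]
  exact PSL2Z.mk_rel (Set.mem_insert _ _)

lemma PSL2Z.rP_def : PSL2Z.rP = PresentedGroup.of false := rfl
lemma PSL2Z.lP_def : PSL2Z.lP = PresentedGroup.of true := rfl

lemma PSL2Z.uP_cube : PSL2Z.uP ^ (3 : ℕ) = 1 := by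
  have h : PSL2Z.uP ^ (3 : ℕ) = PresentedGroup.mk pslRels ((genL * genR⁻¹) ^ 3) := by
    rw [_root_.map_pow, _root_.map_mul, _root_.map_inv]
    rfl
  rw [h]
  exact PSL2Z.mk_rel (Set.mem_insert_iff.mpr (Or.inr rfl))

lemma PSL2Z.uP_cube' : PSL2Z.uP * PSL2Z.uP * PSL2Z.uP = 1 := by
  rw [← sq, ← pow_succ]
  exact PSL2Z.uP_cube


def PSL2Z.rho : Monoid.CoprodI PSL2Z.Fam →* PresentedGroup pslRels :=
  Monoid.CoprodI.lift (fun b => by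
    cases b
    · exact PSL2Z.zmodHom 2 PSL2Z.sP PSL2Z.sP_sq
    · exact PSL2Z.zmodHom 3 PSL2Z.uP PSL2Z.uP_cube)

lemma PSL2Z.rho_sig : PSL2Z.rho PSL2Z.sig = PSL2Z.sP := by
  erw [PSL2Z.rho, PSL2Z.sig, Monoid.CoprodI.lift_of]
  show PSL2Z.zmodHom 2 PSL2Z.sP PSL2Z.sP_sq (Multiplicative.ofAdd (1 : ZMod 2)) = PSL2Z.sP
  rw [PSL2Z.zmodHom_apply', show (1 : ZMod 2).val = 1 by decide, pow_one]

lemma PSL2Z.rho_ups : PSL2Z.rho PSL2Z.ups = PSL2Z.uP := by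
  erw [PSL2Z.rho, PSL2Z.ups, Monoid.CoprodI.lift_of]
  show PSL2Z.zmodHom 3 PSL2Z.uP PSL2Z.uP_cube (Multiplicative.ofAdd (1 : ZMod 3)) = PSL2Z.uP
  rw [PSL2Z.zmodHom_apply', show (1 : ZMod 3).val = 1 by decide, pow_one]

lemma PSL2Z.rho_theta_of (b : Bool) :
    PSL2Z.rho (PSL2Z.theta (PresentedGroup.of b)) = PresentedGroup.of b := by
  rw [PSL2Z.theta_of]
  cases b
  · rw [show PSL2Z.fb false = PSL2Z.ups * PSL2Z.sig from rfl, _root_.map_mul, PSL2Z.rho_sig,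
      PSL2Z.rho_ups]
    have h : PSL2Z.uP * PSL2Z.sP = (PSL2Z.uP * PSL2Z.uP * PSL2Z.uP) * PSL2Z.rP := by
      rw [PSL2Z.uP, PSL2Z.sP, PSL2Z.rP, PSL2Z.lP]
      group
    rw [h, PSL2Z.uP_cube', one_mul]; rfl
  · rw [show PSL2Z.fb true = PSL2Z.ups * PSL2Z.ups * PSL2Z.sig from rfl, _root_.map_mul, _root_.map_mul,
      PSL2Z.rho_sig, PSL2Z.rho_ups]
    have h : PSL2Z.uP * PSL2Z.uP * PSL2Z.sP = (PSL2Z.uP * PSL2Z.uP * PSL2Z.uP) * PSL2Z.lP := by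
      rw [PSL2Z.uP, PSL2Z.sP, PSL2Z.lP]
      group
    rw [h, PSL2Z.uP_cube', one_mul]; rfl

lemma PSL2Z.theta_inj : Function.Injective PSL2Z.theta := by
  have hcomp : PSL2Z.rho.comp PSL2Z.theta = MonoidHom.id _ :=
    PresentedGroup.ext (fun x => PSL2Z.rho_theta_of x)
  intro a b h
  have ha := DFunLike.congr_fun hcomp a
  have hb := DFunLike.congr_fun hcomp b
  simp only [MonoidHom.comp_apply, MonoidHom.id_apply] at ha hb
  rw [← ha, ← hb, h]

/-! ### the isomorphism -/

noncomputable def PSL2Z.kappa : Monoid.CoprodI PSL2Z.Fam →* Q2 := Monoid.CoprodI.lift PSL2Z.fQ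

lemma PSL2Z.kappa_sig : PSL2Z.kappa PSL2Z.sig = PSL2Z.sQ := by
  erw [PSL2Z.kappa, PSL2Z.sig, Monoid.CoprodI.lift_of]
  exact PSL2Z.fQ_false_one

lemma PSL2Z.kappa_ups : PSL2Z.kappa PSL2Z.ups = PSL2Z.uQ := by
  erw [PSL2Z.kappa, PSL2Z.ups, Monoid.CoprodI.lift_of]
  exact PSL2Z.fQ_true_one

noncomputable def PSL2Z.phi : PresentedGroup pslRels →* Q2 := PSL2Z.kappa.comp PSL2Z.theta

lemma PSL2Z.mk_neg (g : SL2Z) : (QuotientGroup.mk (-g) : Q2) = QuotientGroup.mk g := by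
  rw [PSL2Z.neg_eq, show (QuotientGroup.mk ((-1 : SL2Z) * g) : Q2) =
    QuotientGroup.mk (-1 : SL2Z) * QuotientGroup.mk g from rfl,
    (QuotientGroup.eq_one_iff _).mpr PSL2Z.neg_one_mem_center, one_mul]

lemma PSL2Z.phi_r : PSL2Z.phi PSL2Z.rP = (QuotientGroup.mk matR : Q2) := by
  rw [PSL2Z.phi, MonoidHom.comp_apply, PSL2Z.rP, PSL2Z.theta_of,
    show PSL2Z.fb false = PSL2Z.ups * PSL2Z.sig from rfl, _root_.map_mul, PSL2Z.kappa_sig,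
    PSL2Z.kappa_ups, PSL2Z.uQ, PSL2Z.sQ,
    show (QuotientGroup.mk matU : Q2) * QuotientGroup.mk S = QuotientGroup.mk (matU * S) from rfl,
    PSL2Z.matUS, PSL2Z.mk_neg]

lemma PSL2Z.phi_l : PSL2Z.phi PSL2Z.lP = (QuotientGroup.mk matL : Q2) := by
  rw [PSL2Z.phi, MonoidHom.comp_apply, PSL2Z.lP, PSL2Z.theta_of,
    show PSL2Z.fb true = PSL2Z.ups * PSL2Z.ups * PSL2Z.sig from rfl, _root_.map_mul, _root_.map_mul,
    PSL2Z.kappa_sig, PSL2Z.kappa_ups, PSL2Z.uQ, PSL2Z.sQ,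
    show (QuotientGroup.mk matU : Q2) * QuotientGroup.mk matU * QuotientGroup.mk S =
      QuotientGroup.mk (matU * matU * S) from rfl,
    PSL2Z.matUUS, PSL2Z.mk_neg]

lemma PSL2Z.phi_inj : Function.Injective PSL2Z.phi :=
  PSL2Z.kappa_inj.comp PSL2Z.theta_inj

lemma PSL2Z.phi_surj : Function.Surjective PSL2Z.phi := by
  intro q
  obtain ⟨g, rfl⟩ := QuotientGroup.mk_surjective q
  suffices h : (QuotientGroup.mk g : Q2) ∈ PSL2Z.phi.range by
    obtain ⟨p, hp⟩ := h
    exact ⟨p, hp⟩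
  have hg := PSL2Z.sl2z_gen g
  induction hg using Subgroup.closure_induction with
  | mem x hx =>
    rcases hx with rfl | rfl
    · exact ⟨PSL2Z.sP, by
        rw [PSL2Z.sP, _root_.map_mul, _root_.map_mul, _root_.map_inv, PSL2Z.phi_r, PSL2Z.phi_l,
          show (QuotientGroup.mk matL : Q2) * (QuotientGroup.mk matR)⁻¹ * QuotientGroup.mk matL =
            QuotientGroup.mk (matL * matR⁻¹ * matL) from rfl, PSL2Z.LRL_eq_S]⟩
    · exact ⟨PSL2Z.rP, PSL2Z.phi_r⟩
  | one => exact ⟨1, by simp⟩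
  | mul x y _ _ hx hy =>
    obtain ⟨px, hpx⟩ := hx
    obtain ⟨py, hpy⟩ := hy
    exact ⟨px * py, by rw [_root_.map_mul, hpx, hpy]; rfl⟩
  | inv x _ hx =>
    obtain ⟨px, hpx⟩ := hx
    exact ⟨px⁻¹, by rw [_root_.map_inv, hpx]; rfl⟩

end Glue

/-- **A presentation of `PSL(2, ℤ)`.** The group presented as
`⟨r, l ∣ (l r⁻¹ l)² = 1, (l r⁻¹)³ = 1⟩` is isomorphic to `SL(2, ℤ)` modulo its center,
via an isomorphism sending `r` to the class of `[[1,1],[0,1]]` and `l` to the class of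
`[[1,0],[1,1]]`. -/
theorem presentedGroup_iso_psl2z :
    ∃ φ : PresentedGroup pslRels ≃*
        (Matrix.SpecialLinearGroup (Fin 2) ℤ ⧸
          Subgroup.center (Matrix.SpecialLinearGroup (Fin 2) ℤ)),
      φ (PresentedGroup.of false) = QuotientGroup.mk matR ∧
      φ (PresentedGroup.of true) = QuotientGroup.mk matL := by
  refine ⟨MulEquiv.ofBijective PSL2Z.phi ⟨PSL2Z.phi_inj, PSL2Z.phi_surj⟩, ?_, ?_⟩
  · exact PSL2Z.phi_r
  · exact PSL2Z.phi_l
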